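/- Let S be a finite set, let I_s (s ∈ S) be nonempty finite linearly ordered sets, let > be a total order on X = ⊔_{s∈S} I_s restricting to the given order on each I_s, and let Q : X → J be a map into a finite linearly ordered set J that is nondecreasing with respect to >. Let c be the number of elementary equivalence classes of X. If c + |J| − 1 < |X|, then there exist two distinct elements i₁ < i₂ of X that are consecutive in the order >, lie in the same I_s (hence are elementarily equivalent), and satisfy Q(i₁) = Q(i₂). -/

import Mathlib

/-- A total order (strict, as `<`) on the disjoint union `⊔_{i} A i` which restricts
to the given linear order on each `A i` and satisfies the non-interleaving
condition. -/
def IsSeOrder {ι : Type*} {A : ι → Type*} [∀ i, LinearOrder (A i)]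
    (r : (Σ i, A i) → (Σ i, A i) → Prop) : Prop :=
  IsStrictTotalOrder (Σ i, A i) r ∧
  (∀ (i : ι) (a b : A i), a < b ↔ r ⟨i, a⟩ ⟨i, b⟩) ∧
  (∀ i₁ i₂ : ι, i₁ ≠ i₂ → ¬ ∃ (a₁ b₁ : A i₁) (a₂ b₂ : A i₂),
      r ⟨i₁, a₁⟩ ⟨i₂, a₂⟩ ∧ r ⟨i₂, a₂⟩ ⟨i₁, b₁⟩ ∧ r ⟨i₁, b₁⟩ ⟨i₂, b₂⟩)

/-- An element of `se(ι)^J` with inputs `{A i}`: a total order as in `IsSeOrder`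
together with a map `Q : ⊔ A i → J` which is nondecreasing with respect to it. -/
def IsSeElem {ι : Type*} {A : ι → Type*} [∀ i, LinearOrder (A i)]
    {J : Type*} [LinearOrder J]
    (r : (Σ i, A i) → (Σ i, A i) → Prop) (Q : (Σ i, A i) → J) : Prop :=
  IsSeOrder r ∧ ∀ x y : Σ i, A i, r x y → Q x ≤ Q y

/-- Elementary equivalence of `x, y ∈ ⊔_i A i` with respect to the order `r`:
they lie in the same `A i` and every element strictly between them lies in `A i`. -/
def ElemEquiv {ι : Type*} {A : ι → Type*}
    (r : (Σ i, A i) → (Σ i, A i) → Prop) (x y : Σ i, A i) : Prop :=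
  x.1 = y.1 ∧
    ∀ z : Σ i, A i, (r x z ∧ r z y) ∨ (r y z ∧ r z x) → z.1 = x.1

/-- The number of elementary equivalence classes. -/
noncomputable def NumClasses {ι : Type*} {A : ι → Type*}
    (r : (Σ i, A i) → (Σ i, A i) → Prop) : ℕ :=
  Nat.card {C : Set (Σ i, A i) // ∃ x, C = {y | ElemEquiv r x y}}

section Aux

variable {ι : Type*} {A : ι → Type*} {r : (Σ i, A i) → (Σ i, A i) → Prop}

lemma elemEquiv_refl (hr : IsStrictTotalOrder (Σ i, A i) r) (x : Σ i, A i) :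
    ElemEquiv r x x := by
  haveI := hr
  refine ⟨rfl, fun z hz => ?_⟩
  rcases hz with ⟨h1, h2⟩ | ⟨h1, h2⟩ <;>
    exact absurd (trans_of r h1 h2) (irrefl_of r x)

lemma elemEquiv_symm {x y : Σ i, A i} (h : ElemEquiv r x y) : ElemEquiv r y x :=
  ⟨h.1.symm, fun z hz => (h.2 z hz.symm).trans h.1⟩

lemma elemEquiv_trans (hr : IsStrictTotalOrder (Σ i, A i) r) {x y w : Σ i, A i}
    (hxy : ElemEquiv r x y) (hyw : ElemEquiv r y w) : ElemEquiv r x w := by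
  haveI := hr
  refine ⟨hxy.1.trans hyw.1, fun z hz => ?_⟩
  rcases trichotomous_of r z y with hzy | rfl | hyz
  · rcases hz with ⟨h1, h2⟩ | ⟨h1, h2⟩
    · exact hxy.2 z (Or.inl ⟨h1, hzy⟩)
    · exact (hyw.2 z (Or.inr ⟨h1, hzy⟩)).trans hxy.1.symm
  · exact hxy.1.symm
  · rcases hz with ⟨h1, h2⟩ | ⟨h1, h2⟩
    · exact (hyw.2 z (Or.inl ⟨hyz, h2⟩)).trans hxy.1.symm
    · exact hxy.2 z (Or.inr ⟨hyz, h2⟩)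

lemma elemEquiv_between (hr : IsStrictTotalOrder (Σ i, A i) r) {x y z : Σ i, A i}
    (hxy : ElemEquiv r x y) (h1 : r x z ∨ x = z) (h2 : r z y ∨ z = y) :
    ElemEquiv r z y := by
  haveI := hr
  rcases h1 with h1 | rfl
  · rcases h2 with h2 | rfl
    · refine ⟨(hxy.2 z (Or.inl ⟨h1, h2⟩)).trans hxy.1, fun w hw => ?_⟩
      rcases hw with ⟨hw1, hw2⟩ | ⟨hw1, hw2⟩
      · exact (hxy.2 w (Or.inl ⟨trans_of r h1 hw1, hw2⟩)).trans
          (hxy.2 z (Or.inl ⟨h1, h2⟩)).symm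
      · exact absurd (trans_of r hw2 (trans_of r h2 hw1)) (irrefl_of r w)
    · exact elemEquiv_refl hr z
  · exact hxy

end Aux

section Key


variable {α : Type*} [Fintype α] {J : Type*} [Fintype J] [LinearOrder J]

lemma key_counting (r : α → α → Prop) (E : α → α → Prop) (Q : α → J)
    (hr : IsStrictTotalOrder α r)
    (hErefl : ∀ a, E a a)
    (hEsymm : ∀ a b, E a b → E b a)
    (hEtrans : ∀ a b c, E a b → E b c → E a c)
    (hEbet : ∀ a b c, E a c → (r a b ∨ a = b) → (r b c ∨ b = c) → E b c)
    (hQ : ∀ a b, r a b → Q a ≤ Q b)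
    (hcard : Nat.card {C : Set α // ∃ a, C = {b | E a b}} + Fintype.card J - 1
      < Fintype.card α) :
    ∃ a b : α, r a b ∧ (¬ ∃ z, r a z ∧ r z b) ∧ E a b ∧ Q a = Q b := by
  classical
  by_contra hcon
  haveI := hr
  letI : LinearOrder α := linearOrderOfSTO r
  obtain ⟨m, hm⟩ : ∃ m, Fintype.card α = m + 1 := by
    have : 0 < Fintype.card α := lt_of_le_of_lt (Nat.zero_le _) hcard
    exact ⟨Fintype.card α - 1, by omega⟩
  let e := monoEquivOfFin α hm
  set x : Fin (m + 1) → α := fun k => e k with hx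
  have hlt : ∀ a b : Fin (m + 1), a < b → r (x a) (x b) :=
    fun a b h => e.lt_iff_lt.mpr h
  have hlt2 : ∀ a b : Fin (m + 1), r (x a) (x b) → a < b :=
    fun a b h => e.lt_iff_lt.mp h
  have hQm : ∀ a b : Fin (m + 1), a ≤ b → Q (x a) ≤ Q (x b) := by
    intro a b hab
    rcases eq_or_lt_of_le hab with rfl | h
    · exact le_rfl
    · exact hQ _ _ (hlt _ _ h)
  -- the "first element of the class" function
  let Cset : Fin (m + 1) → Finset (Fin (m + 1)) :=
    fun k => Finset.univ.filter fun l => E (x l) (x k)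
  have hCne : ∀ k, (Cset k).Nonempty :=
    fun k => ⟨k, by simp [Cset, hErefl]⟩
  let g : Fin (m + 1) → Fin (m + 1) := fun k => (Cset k).min' (hCne k)
  have hgmem : ∀ k, E (x (g k)) (x k) := by
    intro k
    have := (Cset k).min'_mem (hCne k)
    simpa [Cset] using this
  have hgleast : ∀ k l, E (x l) (x k) → g k ≤ l :=
    fun k l h => Finset.min'_le _ _ (by simp [Cset, h])
  have hgle : ∀ k, g k ≤ k := fun k => hgleast k k (hErefl (x k))
  have hgeq : ∀ k k', E (x k) (x k') → g k = g k' := by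
    intro k k' h
    exact le_antisymm (hgleast k (g k') (hEtrans _ _ _ (hgmem k') (hEsymm _ _ h)))
      (hgleast k' (g k) (hEtrans _ _ _ (hgmem k) h))
  have hge : ∀ k k', g k = g k' → E (x k) (x k') := by
    intro k k' h
    have h1 := hgmem k
    rw [h] at h1
    exact hEtrans _ _ _ (hEsymm _ _ h1) (hgmem k')
  have hbet : ∀ a b c : Fin (m + 1), a ≤ b → b ≤ c →
      E (x a) (x c) → E (x b) (x c) := by
    intro a b c hab hbc h
    refine hEbet _ _ _ h ?_ ?_
    · rcases eq_or_lt_of_le hab with heq | hl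
      · exact Or.inr (by rw [heq])
      · exact Or.inl (hlt _ _ hl)
    · rcases eq_or_lt_of_le hbc with heq | hl
      · exact Or.inr (by rw [heq])
      · exact Or.inl (hlt _ _ hl)
  have hgmono : ∀ a b : Fin (m + 1), a ≤ b → g a ≤ g b := by
    intro a b hab
    by_contra hco
    push_neg at hco
    have h1 : E (x (g a)) (x b) :=
      hbet (g b) (g a) b (le_of_lt hco) ((hgle a).trans hab) (hgmem b)
    have h2 : E (x a) (x b) := hEtrans _ _ _ (hEsymm _ _ (hgmem a)) h1
    exact absurd (hgeq a b h2) (ne_of_gt hco)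
  -- consecutive elements
  have hcons : ∀ k : Fin m, ¬ ∃ z, r (x k.castSucc) z ∧ r z (x k.succ) := by
    rintro k ⟨z, hz1, hz2⟩
    have hxz : x (e.symm z) = z := by simp [hx]
    have h1 : k.castSucc < e.symm z := hlt2 _ _ (by rw [hxz]; exact hz1)
    have h2 : e.symm z < k.succ := hlt2 _ _ (by rw [hxz]; exact hz2)
    rw [Fin.lt_def] at h1 h2
    simp only [Fin.coe_castSucc, Fin.val_succ] at h1 h2
    omega
  have hstep : ∀ k : Fin m, E (x k.castSucc) (x k.succ) →
      Q (x k.castSucc) < Q (x k.succ) := by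
    intro k hk
    have hr12 : r (x k.castSucc) (x k.succ) := hlt _ _ (Fin.castSucc_lt_succ : (k).castSucc < (k).succ)
    rcases lt_or_eq_of_le (hQ _ _ hr12) with h | h
    · exact h
    · exact absurd ⟨x k.castSucc, x k.succ, hr12, hcons k, hk, h⟩ hcon
  -- classes
  let CT := {C : Set α // ∃ a, C = {b | E a b}}
  haveI : Finite CT := by infer_instance
  haveI := Fintype.ofFinite CT
  let cl : Fin (m + 1) → CT := fun k => ⟨{b | E (x k) b}, ⟨x k, rfl⟩⟩
  have hclinj : ∀ k k', cl k = cl k' → E (x k) (x k') := by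
    intro k k' h
    have hv : ({b | E (x k) b} : Set α) = {b | E (x k') b} := congrArg Subtype.val h
    have : x k' ∈ ({b | E (x k) b} : Set α) := by
      rw [hv]; exact hErefl (x k')
    exact this
  have hsucc_le : ∀ {k k' : Fin m}, k < k' → k.succ ≤ k'.castSucc := by
    intro k k' h
    rw [Fin.le_def]
    rw [Fin.lt_def] at h
    simp only [Fin.val_succ, Fin.coe_castSucc]
    omega
  let P : Fin m → Prop := fun k => E (x k.castSucc) (x k.succ)
  let B := Finset.univ.filter fun k => P k
  let A := Finset.univ.filter fun k => ¬ P k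
  have hAB : B.card + A.card = m := by
    rw [Finset.card_filter_add_card_filter_not]
    simp
  -- bound on A
  have hAnot : ∀ k ∈ A, g k.castSucc ≠ g k.succ := by
    intro k hk h
    exact (Finset.mem_filter.mp hk).2 (hge _ _ h)
  have hkeyA : ∀ k ∈ A, ∀ k' ∈ A, k < k' → cl k.succ ≠ cl k'.succ := by
    intro k hk k' hk' hkk heq
    have h1 : g k.succ = g k'.succ := hgeq _ _ (hclinj _ _ heq)
    have h2 : g k.succ ≤ g k'.castSucc := hgmono _ _ (hsucc_le hkk)
    have h3 : g k'.castSucc ≤ g k'.succ :=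
      hgmono _ _ (le_of_lt (Fin.castSucc_lt_succ : (k').castSucc < (k').succ))
    exact hAnot k' hk' (le_antisymm h3 (by rw [← h1]; exact h2))
  have hA0 : ∀ k ∈ A, cl k.succ ≠ cl 0 := by
    intro k hk heq
    have h1 : g k.succ = g 0 := hgeq _ _ (hclinj _ _ heq)
    have h2 : g 0 ≤ g k.castSucc := hgmono _ _ (Fin.zero_le _)
    have h3 : g k.castSucc ≤ g k.succ :=
      hgmono _ _ (le_of_lt (Fin.castSucc_lt_succ : (k).castSucc < (k).succ))
    exact hAnot k hk (le_antisymm h3 (by rw [h1]; exact h2))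
  have hAcard : A.card ≤ Fintype.card CT - 1 := by
    have hinj : Set.InjOn (fun k : Fin m => cl k.succ) A := by
      intro a ha b hb hab
      rcases lt_trichotomy a b with h | h | h
      · exact absurd hab (hkeyA a (Finset.mem_coe.mp ha) b (Finset.mem_coe.mp hb) h)
      · exact h
      · exact absurd hab.symm (hkeyA b (Finset.mem_coe.mp hb) a (Finset.mem_coe.mp ha) h)
    have himg : A.image (fun k : Fin m => cl k.succ) ⊆ Finset.univ.erase (cl 0) := by
      intro c hc
      rw [Finset.mem_image] at hc
      obtain ⟨k, hk, rfl⟩ := hc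
      exact Finset.mem_erase.mpr ⟨hA0 k hk, Finset.mem_univ _⟩
    calc A.card = (A.image (fun k : Fin m => cl k.succ)).card :=
          (Finset.card_image_of_injOn hinj).symm
      _ ≤ (Finset.univ.erase (cl 0)).card := Finset.card_le_card himg
      _ = Fintype.card CT - 1 := by
          rw [Finset.card_erase_of_mem (Finset.mem_univ _), Finset.card_univ]
  -- bound on B
  have hkeyB : ∀ k ∈ B, ∀ k' ∈ B, k < k' → Q (x k.succ) ≠ Q (x k'.succ) := by
    intro k hk k' hk' h heq
    have h2 : Q (x k.succ) ≤ Q (x k'.castSucc) := hQm _ _ (hsucc_le h)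
    have h3 : Q (x k'.castSucc) < Q (x k'.succ) :=
      hstep k' ((Finset.mem_filter.mp hk').2)
    exact absurd heq (ne_of_lt (lt_of_le_of_lt h2 h3))
  have hB0 : ∀ k ∈ B, Q (x k.succ) ≠ Q (x 0) := by
    intro k hk heq
    have h2 : Q (x 0) ≤ Q (x k.castSucc) := hQm _ _ (Fin.zero_le _)
    have h3 : Q (x k.castSucc) < Q (x k.succ) :=
      hstep k ((Finset.mem_filter.mp hk).2)
    exact absurd heq.symm (ne_of_lt (lt_of_le_of_lt h2 h3))
  have hBcard : B.card ≤ Fintype.card J - 1 := by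
    have hinj : Set.InjOn (fun k : Fin m => Q (x k.succ)) B := by
      intro a ha b hb hab
      rcases lt_trichotomy a b with h | h | h
      · exact absurd hab (hkeyB a (Finset.mem_coe.mp ha) b (Finset.mem_coe.mp hb) h)
      · exact h
      · exact absurd hab.symm (hkeyB b (Finset.mem_coe.mp hb) a (Finset.mem_coe.mp ha) h)
    have himg : B.image (fun k : Fin m => Q (x k.succ)) ⊆ Finset.univ.erase (Q (x 0)) := by
      intro c hc
      rw [Finset.mem_image] at hc
      obtain ⟨k, hk, rfl⟩ := hc
      exact Finset.mem_erase.mpr ⟨hB0 k hk, Finset.mem_univ _⟩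
    calc B.card = (B.image (fun k : Fin m => Q (x k.succ))).card :=
          (Finset.card_image_of_injOn hinj).symm
      _ ≤ (Finset.univ.erase (Q (x 0))).card := Finset.card_le_card himg
      _ = Fintype.card J - 1 := by
          rw [Finset.card_erase_of_mem (Finset.mem_univ _), Finset.card_univ]
  have hc1 : 1 ≤ Fintype.card CT := Fintype.card_pos_iff.mpr ⟨cl 0⟩
  have hJ1 : 1 ≤ Fintype.card J := Fintype.card_pos_iff.mpr ⟨Q (x 0)⟩
  have hNC : Nat.card {C : Set α // ∃ a, C = {b | E a b}} = Fintype.card CT :=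
    Nat.card_eq_fintype_card
  rw [hm, hNC] at hcard
  omega

end Key

/-- If the number `c` of elementary equivalence classes satisfies
`c + |J| − 1 < |X|` (`X = ⊔_s I_s`), then there are two consecutive elements of `X`
lying in the same `I_s` (hence elementarily equivalent) with the same `Q`-image. -/
theorem statement14 {S : Type*} [Fintype S] {I : S → Type*} [∀ s, Fintype (I s)]
    [∀ s, LinearOrder (I s)] [∀ s, Nonempty (I s)]
    {J : Type*} [Fintype J] [LinearOrder J]
    (r : (Σ s, I s) → (Σ s, I s) → Prop) (Q : (Σ s, I s) → J)
    (hr : IsStrictTotalOrder (Σ s, I s) r)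
    (hres : ∀ (s : S) (a b : I s), a < b ↔ r ⟨s, a⟩ ⟨s, b⟩)
    (hQ : ∀ x y : Σ s, I s, r x y → Q x ≤ Q y)
    (hcard : NumClasses r + Fintype.card J - 1 < Fintype.card (Σ s, I s)) :
    ∃ i₁ i₂ : Σ s, I s, r i₁ i₂ ∧ (¬ ∃ z, r i₁ z ∧ r z i₂) ∧
      i₁.1 = i₂.1 ∧ ElemEquiv r i₁ i₂ ∧ Q i₁ = Q i₂ := by
  obtain ⟨a, b, h1, h2, h3, h4⟩ :=
    key_counting r (ElemEquiv r) Q hr (elemEquiv_refl hr)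
      (fun _ _ => elemEquiv_symm) (fun _ _ _ => elemEquiv_trans hr)
      (fun _ _ _ => elemEquiv_between hr) hQ hcard
  exact ⟨a, b, h1, h2, h3.1, h3, h4⟩
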